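/- There exists a universal constant c > 0 such that for all integers n, W ≥ 1 and every real λ ≥ 0, P_{∞,W,n}(max C_π(0) > λ + 2W) ≤ (1 − c/W²)·P_{∞,W,n}(max C_π(0) > λ). -/

import Mathlib

open Finset

/-- The integer interval `[-n, n]`, as a type. -/
abbrev Box (n : ℕ) : Type := {x : ℤ // x ∈ Finset.Icc (-(n : ℤ)) (n : ℤ)}

/-- The point `0 ∈ [-n, n]`. -/
def boxZero (n : ℕ) : Box n :=
  ⟨0, by simp⟩

/-- The maximum of the cycle of `j` under `π`, i.e. `max C_π(j)` where
`C_π(j) = {π^k(j) : k ∈ ℤ}`. -/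
noncomputable def maxCycle {n : ℕ} (π : Equiv.Perm (Box n)) (j : Box n) : ℤ :=
  sSup {x : ℤ | ∃ k : ℤ, (((π ^ k) j : Box n) : ℤ) = x}

/-- The minimum of the cycle of `j` under `π`. -/
noncomputable def minCycle {n : ℕ} (π : Equiv.Perm (Box n)) (j : Box n) : ℤ :=
  sInf {x : ℤ | ∃ k : ℤ, (((π ^ k) j : Box n) : ℤ) = x}

/-- The diameter of the cycle of `j` under `π`. -/
noncomputable def diamCycle {n : ℕ} (π : Equiv.Perm (Box n)) (j : Box n) : ℤ :=
  maxCycle π j - minCycle π j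

/-- The Boltzmann–Gibbs weight `exp(-W^{-p} Σ_i |π(i) - i|^p)`. -/
noncomputable def gibbsWeight (p : ℝ) (W n : ℕ) (π : Equiv.Perm (Box n)) : ℝ :=
  Real.exp (-(W : ℝ) ^ (-p) * ∑ i : Box n, |((π i : ℤ) : ℝ) - ((i : ℤ) : ℝ)| ^ p)

open scoped Classical in
/-- The probability of the event `E` under the Gibbs measure `P_{p,W,n}`. -/
noncomputable def gibbsProb (p : ℝ) (W n : ℕ) (E : Set (Equiv.Perm (Box n))) : ℝ :=
  (∑ π : Equiv.Perm (Box n), if π ∈ E then gibbsWeight p W n π else 0) /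
    ∑ π : Equiv.Perm (Box n), gibbsWeight p W n π

/-- The probability of a single permutation under the Gibbs measure `P_{p,W,n}`. -/
noncomputable def gibbsP (p : ℝ) (W n : ℕ) (π : Equiv.Perm (Box n)) : ℝ :=
  gibbsWeight p W n π / ∑ σ : Equiv.Perm (Box n), gibbsWeight p W n σ

/-- The set `S_W` of permutations displacing each point by at most `W`. -/
def SW (n W : ℕ) : Set (Equiv.Perm (Box n)) :=
  {π | ∀ i : Box n, |(π i : ℤ) - (i : ℤ)| ≤ (W : ℤ)}

open scoped Classical in
/-- The probability of the event `E` under the uniform measure `P_{∞,W,n}` on `S_W`. -/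
noncomputable def unifProb (W n : ℕ) (E : Set (Equiv.Perm (Box n))) : ℝ :=
  ((Finset.univ.filter fun π : Equiv.Perm (Box n) => π ∈ SW n W ∧ π ∈ E).card : ℝ) /
    ((Finset.univ.filter fun π : Equiv.Perm (Box n) => π ∈ SW n W).card : ℝ)

/-- `Period(π, j)`: the least positive `m` with `π^m(j) = j`. -/
noncomputable def permPeriod {n : ℕ} (π : Equiv.Perm (Box n)) (j : Box n) : ℕ :=
  sInf {m : ℕ | 0 < m ∧ (π ^ m) j = j}

/-- `i_first(π)` for the threshold `t`. -/
noncomputable def iFirst {n : ℕ} (t : ℝ) (π : Equiv.Perm (Box n)) : ℕ :=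
  sInf {j : ℕ | ((((π ^ j) (boxZero n) : Box n) : ℤ) : ℝ) ≤ t ∧
    t < ((((π ^ (j + 1)) (boxZero n) : Box n) : ℤ) : ℝ)}

/-- `i_last(π)` for the threshold `t`. -/
noncomputable def iLast {n : ℕ} (t : ℝ) (π : Equiv.Perm (Box n)) : ℕ :=
  sSup {j : ℕ | j < permPeriod π (boxZero n) ∧
    ((((π ^ (j + 1)) (boxZero n) : Box n) : ℤ) : ℝ) ≤ t ∧
    t < ((((π ^ j) (boxZero n) : Box n) : ℤ) : ℝ)}

/-- The uncrossing map `Φ_t(π) = π ∘ (π^{i_first+1}(0)  π^{i_last+1}(0))`. -/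
noncomputable def Phi {n : ℕ} (t : ℝ) (π : Equiv.Perm (Box n)) : Equiv.Perm (Box n) :=
  π * Equiv.swap ((π ^ (iFirst t π + 1)) (boxZero n)) ((π ^ (iLast t π + 1)) (boxZero n))


section AuxOneStep

variable {n : ℕ}

private lemma box_coe_le (x : Box n) : (x : ℤ) ≤ (n : ℤ) := (Finset.mem_Icc.mp x.2).2

private lemma orbit_nonempty (π : Equiv.Perm (Box n)) :
    {x : ℤ | ∃ k : ℤ, (((π ^ k) (boxZero n) : Box n) : ℤ) = x}.Nonempty :=
  ⟨(((π ^ (0:ℤ)) (boxZero n) : Box n) : ℤ), 0, rfl⟩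

private lemma orbit_bdd (π : Equiv.Perm (Box n)) :
    BddAbove {x : ℤ | ∃ k : ℤ, (((π ^ k) (boxZero n) : Box n) : ℤ) = x} :=
  ⟨(n : ℤ), by rintro x ⟨k, rfl⟩; exact box_coe_le _⟩

private lemma maxCycle_mem (π : Equiv.Perm (Box n)) :
    ∃ k : ℤ, (((π ^ k) (boxZero n) : Box n) : ℤ) = maxCycle π (boxZero n) :=
  Int.csSup_mem (orbit_nonempty π) (orbit_bdd π)

private lemma le_maxCycle (π : Equiv.Perm (Box n)) (k : ℤ) :
    (((π ^ k) (boxZero n) : Box n) : ℤ) ≤ maxCycle π (boxZero n) :=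
  le_csSup (orbit_bdd π) ⟨k, rfl⟩

private lemma maxCycle_le (π : Equiv.Perm (Box n)) (b : ℤ)
    (h : ∀ k : ℤ, (((π ^ k) (boxZero n) : Box n) : ℤ) ≤ b) :
    maxCycle π (boxZero n) ≤ b :=
  csSup_le (orbit_nonempty π) (by rintro x ⟨k, rfl⟩; exact h k)

private lemma zpow_reduce (e : Equiv.Perm (Box n)) (a : Box n) {m : ℕ} (hm : 0 < m)
    (h : (e ^ m) a = a) (k : ℤ) : ∃ j : ℕ, j < m ∧ (e ^ k) a = (e ^ j) a := by
  have hm' : (0:ℤ) < (m:ℤ) := by exact_mod_cast hm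
  have h1 : 0 ≤ k % (m:ℤ) := Int.emod_nonneg k hm'.ne'
  have h2 : k % (m:ℤ) < (m:ℤ) := Int.emod_lt_of_pos k hm'
  refine ⟨(k % (m:ℤ)).toNat, by omega, ?_⟩
  have hfix : (e ^ ((m:ℤ) * (k / (m:ℤ)))) a = a := by
    rw [zpow_mul, zpow_natCast]
    exact Equiv.Perm.zpow_apply_eq_self_of_apply_eq_self h _
  have hsplit : e ^ k = e ^ (k % (m:ℤ)) * e ^ ((m:ℤ) * (k / (m:ℤ))) := by
    rw [← zpow_add]; congr 1; exact (Int.emod_add_mul_ediv k (m:ℤ)).symm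
  rw [hsplit, Equiv.Perm.mul_apply, hfix, ← zpow_natCast, Int.toNat_of_nonneg h1]

private lemma period_pos (π : Equiv.Perm (Box n)) (a : Box n) :
    0 < Function.minimalPeriod (⇑π) a := by
  apply Function.IsPeriodicPt.minimalPeriod_pos (orderOf_pos π)
  show (⇑π)^[orderOf π] a = a
  rw [← Equiv.Perm.coe_pow, pow_orderOf_eq_one]
  rfl

private lemma period_apply (π : Equiv.Perm (Box n)) (a : Box n) :
    (π ^ Function.minimalPeriod (⇑π) a) a = a := by
  have := Function.isPeriodicPt_minimalPeriod (⇑π) a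
  simpa [Equiv.Perm.coe_pow] using this

private lemma pow_inj (π : Equiv.Perm (Box n)) (a : Box n) {i j : ℕ}
    (hi : i < Function.minimalPeriod (⇑π) a) (hj : j < Function.minimalPeriod (⇑π) a)
    (hij : (π ^ i) a = (π ^ j) a) : i = j := by
  refine Function.iterate_injOn_Iio_minimalPeriod (Set.mem_Iio.mpr hi) (Set.mem_Iio.mpr hj) ?_
  simpa only [← Equiv.Perm.coe_pow] using hij

end AuxOneStep

open scoped Classical in
private lemma key_uncross (n W : ℕ) (hW : 1 ≤ W) (lam : ℝ) (hlam : 0 ≤ lam)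
    (π : Equiv.Perm (Box n)) (hπ : π ∈ SW n W)
    (hmax : lam + 2 * W < ((maxCycle π (boxZero n) : ℤ) : ℝ)) :
    ∃ x y : Box n,
      (⌊lam + W⌋ - W + 1 ≤ (x : ℤ) ∧ (x : ℤ) ≤ ⌊lam + W⌋) ∧
      (⌊lam + W⌋ + 1 ≤ (y : ℤ) ∧ (y : ℤ) ≤ ⌊lam + W⌋ + W) ∧
      (π * Equiv.swap x y) ∈ SW n W ∧
      lam < ((maxCycle (π * Equiv.swap x y) (boxZero n) : ℤ) : ℝ) ∧
      ((maxCycle (π * Equiv.swap x y) (boxZero n) : ℤ) : ℝ) ≤ lam + 2 * W := by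
  set a := boxZero n with ha
  set t : ℝ := lam + W with ht
  have hW1 : (1:ℝ) ≤ (W:ℝ) := by exact_mod_cast hW
  have ht0 : 0 ≤ t := by rw [ht]; linarith
  set f : ℕ → ℤ := fun j => (((π ^ j) a : Box n) : ℤ) with hf
  have hf0 : f 0 = 0 := by simp [hf, ha]; rfl
  have hstep : ∀ j : ℕ, |f (j + 1) - f j| ≤ (W : ℤ) := by
    intro j
    have h := hπ ((π ^ j) a)
    have : (π ^ (j + 1)) a = π ((π ^ j) a) := by
      rw [pow_succ', Equiv.Perm.mul_apply]
    simpa [hf, this] using h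
  have hstepR : ∀ j : ℕ, ((f (j+1) : ℤ) : ℝ) - (f j : ℝ) ≤ W ∧
      ((f j : ℤ) : ℝ) - (f (j+1) : ℝ) ≤ W := by
    intro j
    obtain ⟨h1, h2⟩ := abs_le.mp (hstep j)
    constructor <;> [exact_mod_cast (by linarith : ((f (j+1) - f j : ℤ)) ≤ (W:ℤ));
      exact_mod_cast (by linarith : ((f j - f (j+1) : ℤ)) ≤ (W:ℤ))]
  set m := Function.minimalPeriod (⇑π) a with hmdef
  have hm : 0 < m := period_pos π a
  have hma : (π ^ m) a = a := period_apply π a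
  have hfm : f m = 0 := by rw [hf]; simp only [hma]; rfl
  have hinj : ∀ i j : ℕ, i < m → j < m → (π ^ i) a = (π ^ j) a → i = j :=
    fun i j hi hj hij => pow_inj π a hi hj hij
  -- a point of the orbit above t
  obtain ⟨k0, hk0⟩ := maxCycle_mem π
  obtain ⟨J0, hJ0m, hJ0eq⟩ := zpow_reduce π a hm hma k0
  rw [← ha] at hk0
  have hfJ0 : (f J0 : ℤ) = maxCycle π a := by
    rw [show f J0 = (((π ^ J0) a : Box n) : ℤ) from rfl, ← hJ0eq, hk0]
  have hJ0 : t < ((f J0 : ℤ) : ℝ) := by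
    rw [hfJ0, ht]
    calc lam + (W:ℝ) ≤ lam + 2*W := by linarith
      _ < _ := hmax
  have hJ0pos : 1 ≤ J0 := by
    by_contra h
    have : J0 = 0 := by omega
    rw [this, hf0] at hJ0
    simp at hJ0; linarith
  -- first up-crossing
  have hex : ∃ j : ℕ, t < ((f (j + 1) : ℤ) : ℝ) :=
    ⟨J0 - 1, by rwa [show J0 - 1 + 1 = J0 by omega]⟩
  set iF := Nat.find hex with hiFdef
  have hiF1 : t < ((f (iF + 1) : ℤ) : ℝ) := Nat.find_spec hex
  have hpre : ∀ j, j ≤ iF → ((f j : ℤ) : ℝ) ≤ t := by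
    intro j hj
    cases j with
    | zero => rw [hf0]; simpa using ht0
    | succ j =>
      have := Nat.find_min hex (m := j) (by omega)
      linarith [not_lt.mp this]
  have hiFJ : iF ≤ J0 - 1 := Nat.find_min' hex (by rwa [show J0 - 1 + 1 = J0 by omega])
  have hiFm : iF < m := by omega
  -- last point above t
  set P2 : ℕ → Prop := fun j => t < ((f j : ℤ) : ℝ) with hP2
  set iL := Nat.findGreatest P2 (m - 1) with hiLdef
  have hwitle : iF + 1 ≤ m - 1 := by omega
  have hwitP : P2 (iF + 1) := hiF1
  have hiLt : t < ((f iL : ℤ) : ℝ) := by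
    have : P2 iL := by rw [hiLdef]; exact Nat.findGreatest_spec hwitle hwitP
    exact this
  have hiLge : iF + 1 ≤ iL := by
    rw [hiLdef]; exact Nat.le_findGreatest hwitle hwitP
  have hiLle : iL ≤ m - 1 := by rw [hiLdef]; exact Nat.findGreatest_le _
  have hiLm : iL < m := by omega
  have hpost : ∀ j, iL < j → j ≤ m → ((f j : ℤ) : ℝ) ≤ t := by
    intro j h1 h2
    rcases eq_or_lt_of_le h2 with h3 | h3
    · rw [h3, hfm]; simpa using ht0
    · rw [hiLdef] at h1
      have : ¬ P2 j := Nat.findGreatest_is_greatest h1 (by omega)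
      rw [hP2] at this
      simp only [not_lt] at this
      exact this
  have hiL1t : ((f (iL + 1) : ℤ) : ℝ) ≤ t := hpost _ (by omega) (by omega)
  have hiFt : ((f iF : ℤ) : ℝ) ≤ t := hpre iF le_rfl
  -- coordinate bounds
  have hiFlow : t - W < ((f iF : ℤ) : ℝ) := by
    have := (hstepR iF).1; linarith
  have hiLup : ((f iL : ℤ) : ℝ) ≤ t + W := by
    have := (hstepR iL).2; linarith
  have hiL1low : t - W < ((f (iL + 1) : ℤ) : ℝ) := by
    have := (hstepR iL).2; linarith
  have hiF1up : ((f (iF + 1) : ℤ) : ℝ) ≤ t + W := by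
    have := (hstepR iF).1; linarith
  -- the two swap points
  set x := (π ^ iF) a with hx
  set y := (π ^ iL) a with hy
  have hxv : (x : ℤ) = f iF := rfl
  have hyv : (y : ℤ) = f iL := rfl
  have hxy : x ≠ y := by
    intro h
    have : ((f iF : ℤ) : ℝ) = ((f iL : ℤ) : ℝ) := by
      rw [← hxv, ← hyv, h]
    linarith
  set σ := π * Equiv.swap x y with hσ
  have hσx : σ x = (π ^ (iL + 1)) a := by
    rw [hσ, Equiv.Perm.mul_apply, Equiv.swap_apply_left, hy, pow_succ',
      Equiv.Perm.mul_apply]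
  have hσy : σ y = (π ^ (iF + 1)) a := by
    rw [hσ, Equiv.Perm.mul_apply, Equiv.swap_apply_right, hx, pow_succ',
      Equiv.Perm.mul_apply]
  have hσz : ∀ z, z ≠ x → z ≠ y → σ z = π z := by
    intro z h1 h2
    rw [hσ, Equiv.Perm.mul_apply, Equiv.swap_apply_of_ne_of_ne h1 h2]
  -- small helper to compare two integers both in a window of width W
  have window : ∀ u v : ℤ, (u:ℝ) ≤ t → t - W < (u:ℝ) → (v:ℝ) ≤ t → t - W < (v:ℝ) →
      |u - v| ≤ (W:ℤ) := by
    intro u v h1 h2 h3 h4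
    rw [abs_le]
    constructor <;>
    · rw [show ∀ z w : ℤ, (z ≤ w) = (((z:ℝ)) ≤ (w:ℝ)) from fun z w => by
        simp [Int.cast_le]]
      push_cast
      linarith
  -- σ has displacements ≤ W
  have hσSW : σ ∈ SW n W := by
    intro i
    rcases eq_or_ne i x with rfl | hix
    · rw [hσx, hxv]
      have : (((π ^ (iL + 1)) a : Box n) : ℤ) = f (iL + 1) := rfl
      rw [this]
      exact window _ _ hiL1t hiL1low hiFt hiFlow
    rcases eq_or_ne i y with rfl | hiy
    · rw [hσy, hyv]
      have : (((π ^ (iF + 1)) a : Box n) : ℤ) = f (iF + 1) := rfl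
      rw [this]
      have hw2 : ∀ u v : ℤ, t < (u:ℝ) → (u:ℝ) ≤ t + W → t < (v:ℝ) → (v:ℝ) ≤ t + W →
          |u - v| ≤ (W:ℤ) := by
        intro u v h1 h2 h3 h4
        rw [abs_le]
        constructor <;>
        · rw [show ∀ z w : ℤ, (z ≤ w) = (((z:ℝ)) ≤ (w:ℝ)) from fun z w => by
            simp [Int.cast_le]]
          push_cast
          linarith
      exact hw2 _ _ hiF1 hiF1up hiLt hiLup
    · rw [hσz i hix hiy]; exact hπ i
  -- the trajectory of σ
  have hA : ∀ j, j ≤ iF → (σ ^ j) a = (π ^ j) a := by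
    intro j
    induction j with
    | zero => intro _; simp
    | succ j ih =>
      intro hj
      have hj' : j ≤ iF := by omega
      rw [pow_succ', Equiv.Perm.mul_apply, ih hj']
      have hne1 : (π ^ j) a ≠ x := by
        intro hcon
        have := hinj j iF (by omega) hiFm hcon
        omega
      have hne2 : (π ^ j) a ≠ y := by
        intro hcon
        have := hinj j iL (by omega) hiLm hcon
        omega
      rw [hσz _ hne1 hne2, ← Equiv.Perm.mul_apply, ← pow_succ']
  have hB : ∀ r, r ≤ m - (iL + 1) → (σ ^ (iF + 1 + r)) a = (π ^ (iL + 1 + r)) a := by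
    intro r
    induction r with
    | zero =>
      intro _
      rw [show iF + 1 + 0 = iF + 1 from rfl, pow_succ', Equiv.Perm.mul_apply,
        hA iF le_rfl, ← hx, hσx]
    | succ r ih =>
      intro hr
      have hr' : r ≤ m - (iL + 1) := by omega
      have hidx : iL + 1 + r < m := by omega
      rw [show iF + 1 + (r + 1) = (iF + 1 + r) + 1 by omega, pow_succ',
        Equiv.Perm.mul_apply, ih hr']
      have hne1 : (π ^ (iL + 1 + r)) a ≠ x := by
        intro hcon
        have := hinj (iL + 1 + r) iF hidx hiFm hcon
        omega
      have hne2 : (π ^ (iL + 1 + r)) a ≠ y := by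
        intro hcon
        have := hinj (iL + 1 + r) iL hidx hiLm hcon
        omega
      rw [hσz _ hne1 hne2, ← Equiv.Perm.mul_apply, ← pow_succ',
        show iL + 1 + r + 1 = iL + 1 + (r + 1) by omega]
  set p := iF + 1 + (m - (iL + 1)) with hp
  have hppos : 0 < p := by omega
  have hper : (σ ^ p) a = a := by
    rw [hp, hB _ le_rfl, show iL + 1 + (m - (iL + 1)) = m by omega, hma]
  -- upper bound for the new cycle
  have hupper : maxCycle σ a ≤ ⌊t⌋ := by
    apply maxCycle_le
    intro k
    obtain ⟨j, hjp, hjeq⟩ := zpow_reduce σ a hppos hper k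
    rw [hjeq]
    apply Int.le_floor.mpr
    rcases le_or_gt j iF with hj | hj
    · rw [hA j hj]
      exact hpre j hj
    · set r := j - (iF + 1) with hr
      have hjr : j = iF + 1 + r := by omega
      have hrle : r ≤ m - (iL + 1) := by omega
      rw [hjr, hB r hrle]
      exact hpost (iL + 1 + r) (by omega) (by omega)
  -- lower bound for the new cycle
  have hlower : (x : ℤ) ≤ maxCycle σ a := by
    have h1 : (σ ^ (iF : ℤ)) a = x := by
      rw [zpow_natCast, hA iF le_rfl, hx]
    have := le_maxCycle σ (iF : ℤ)
    rwa [h1] at this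
  refine ⟨x, y, ⟨?_, ?_⟩, ⟨?_, ?_⟩, hσSW, ?_, ?_⟩
  · rw [hxv]
    have h1 : ((⌊t⌋ - W : ℤ) : ℝ) < ((f iF : ℤ) : ℝ) := by
      push_cast
      have := Int.floor_le t
      linarith
    have := Int.cast_lt.mp h1
    omega
  · rw [hxv]; exact Int.le_floor.mpr hiFt
  · rw [hyv]
    have := Int.floor_lt.mpr hiLt
    omega
  · rw [hyv]
    have h1 : f iL - W ≤ ⌊t⌋ := Int.le_floor.mpr (by push_cast; linarith)
    omega
  · have h2 : ((x : ℤ) : ℝ) ≤ ((maxCycle σ a : ℤ) : ℝ) := Int.cast_le.mpr hlower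
    rw [hxv] at h2
    rw [ht] at hiFlow
    linarith
  · have h2 : ((maxCycle σ a : ℤ) : ℝ) ≤ ((⌊t⌋ : ℤ) : ℝ) := Int.cast_le.mpr hupper
    have := Int.floor_le t
    rw [ht] at this
    linarith

/-- There is a universal constant `c > 0` such that for all integers
`n, W ≥ 1` and every real `λ ≥ 0`,
`P_{∞,W,n}(max C_π(0) > λ + 2W) ≤ (1 - c/W²) P_{∞,W,n}(max C_π(0) > λ)`. -/
theorem one_step_contraction_uniform :
    ∃ c : ℝ, 0 < c ∧ ∀ (n W : ℕ), 1 ≤ n → 1 ≤ W → ∀ lam : ℝ, 0 ≤ lam →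
      unifProb W n {π | lam + 2 * W < ((maxCycle π (boxZero n) : ℤ) : ℝ)} ≤
        (1 - c / (W : ℝ) ^ 2) *
          unifProb W n {π | lam < ((maxCycle π (boxZero n) : ℤ) : ℝ)} := by
  classical
  refine ⟨1/2, by norm_num, ?_⟩
  intro n W hn hW lam hlam
  unfold unifProb
  set S := Finset.filter (fun π : Equiv.Perm (Box n) => π ∈ SW n W) Finset.univ with hSdef
  set A := Finset.filter (fun π : Equiv.Perm (Box n) => π ∈ SW n W ∧
    π ∈ {π : Equiv.Perm (Box n) | lam + 2 * (W : ℝ) <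
      ((maxCycle π (boxZero n) : ℤ) : ℝ)}) Finset.univ with hAdef
  set B := Finset.filter (fun π : Equiv.Perm (Box n) => π ∈ SW n W ∧
    π ∈ {π : Equiv.Perm (Box n) | lam <
      ((maxCycle π (boxZero n) : ℤ) : ℝ)}) Finset.univ with hBdef
  set D := Finset.filter (fun π : Equiv.Perm (Box n) => π ∈ SW n W ∧
    (lam < ((maxCycle π (boxZero n) : ℤ) : ℝ) ∧
      ((maxCycle π (boxZero n) : ℤ) : ℝ) ≤ lam + 2 * (W : ℝ))) Finset.univ with hDdef
  have hw1 : (1:ℝ) ≤ (W:ℝ) := by exact_mod_cast hW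
  have hw2 : (0:ℝ) < (W:ℝ)^2 := by positivity
  -- membership lemmas
  have hmemA : ∀ π : Equiv.Perm (Box n), π ∈ A ↔ (π ∈ SW n W ∧
      lam + 2 * (W : ℝ) < ((maxCycle π (boxZero n) : ℤ) : ℝ)) := by
    intro π
    rw [hAdef, Finset.mem_filter]
    simp [Set.mem_setOf_eq]
  have hmemB : ∀ π : Equiv.Perm (Box n), π ∈ B ↔ (π ∈ SW n W ∧
      lam < ((maxCycle π (boxZero n) : ℤ) : ℝ)) := by
    intro π
    rw [hBdef, Finset.mem_filter]
    simp [Set.mem_setOf_eq]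
  have hmemD : ∀ π : Equiv.Perm (Box n), π ∈ D ↔ (π ∈ SW n W ∧
      (lam < ((maxCycle π (boxZero n) : ℤ) : ℝ) ∧
        ((maxCycle π (boxZero n) : ℤ) : ℝ) ≤ lam + 2 * (W : ℝ))) := by
    intro π
    rw [hDdef, Finset.mem_filter]
    simp
  -- positivity of the denominator
  have hS0 : 0 < S.card := by
    apply Finset.card_pos.mpr
    refine ⟨1, ?_⟩
    rw [hSdef, Finset.mem_filter]
    refine ⟨Finset.mem_univ _, ?_⟩
    intro i
    simp
  clear_value S A B D
  -- A and D are disjoint and contained in B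
  have hADle : A.card + D.card ≤ B.card := by
    have hdisj : Disjoint A D := by
      rw [Finset.disjoint_left]
      intro π h1 h2
      obtain ⟨_, hb⟩ := (hmemA π).mp h1
      obtain ⟨_, _, hc⟩ := (hmemD π).mp h2
      linarith
    rw [← Finset.card_union_of_disjoint hdisj]
    apply Finset.card_le_card
    intro π hπ
    rcases Finset.mem_union.mp hπ with h | h
    · obtain ⟨h1, h2⟩ := (hmemA π).mp h
      exact (hmemB π).mpr ⟨h1, by linarith⟩
    · obtain ⟨h1, h2, _⟩ := (hmemD π).mp h
      exact (hmemB π).mpr ⟨h1, h2⟩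
  -- the injection into D × window × window
  set g : Equiv.Perm (Box n) → Equiv.Perm (Box n) × ℤ × ℤ := fun π =>
    if h : ∃ x y : Box n,
      (⌊lam + W⌋ - W + 1 ≤ (x : ℤ) ∧ (x : ℤ) ≤ ⌊lam + W⌋) ∧
      (⌊lam + W⌋ + 1 ≤ (y : ℤ) ∧ (y : ℤ) ≤ ⌊lam + W⌋ + W) ∧
      (π * Equiv.swap x y) ∈ SW n W ∧
      lam < ((maxCycle (π * Equiv.swap x y) (boxZero n) : ℤ) : ℝ) ∧
      ((maxCycle (π * Equiv.swap x y) (boxZero n) : ℤ) : ℝ) ≤ lam + 2 * W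
    then (π * Equiv.swap h.choose h.choose_spec.choose,
      ((h.choose : ℤ), (h.choose_spec.choose : ℤ)))
    else (1, (0, 0)) with hg
  set T := D ×ˢ (Finset.Icc (⌊lam + (W:ℝ)⌋ - W + 1) ⌊lam + (W:ℝ)⌋ ×ˢ
    Finset.Icc (⌊lam + (W:ℝ)⌋ + 1) (⌊lam + (W:ℝ)⌋ + W)) with hT
  set R : Equiv.Perm (Box n) × ℤ × ℤ → Equiv.Perm (Box n) := fun q =>
    if hu : q.2.1 ∈ Finset.Icc (-(n:ℤ)) (n:ℤ) then
      if hv : q.2.2 ∈ Finset.Icc (-(n:ℤ)) (n:ℤ) then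
        q.1 * Equiv.swap (⟨q.2.1, hu⟩ : Box n) (⟨q.2.2, hv⟩ : Box n)
      else q.1
    else q.1 with hR
  have hRg : ∀ π ∈ A, R (g π) = π := by
    intro π hπA
    obtain ⟨hsw, hgt⟩ := (hmemA π).mp hπA
    have hq := key_uncross n W hW lam hlam π hsw hgt
    simp only [hg]
    rw [dif_pos hq]
    simp only [hR]
    rw [dif_pos (hq.choose.2), dif_pos (hq.choose_spec.choose.2), Subtype.eta,
      Subtype.eta, mul_assoc, Equiv.swap_mul_self, mul_one]
  have hinjcard : A.card ≤ D.card * (W * W) := by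
    have hcard : A.card ≤ T.card := by
      apply Finset.card_le_card_of_injOn g
      · intro π hπA
        obtain ⟨hsw, hgt⟩ := (hmemA π).mp hπA
        have hq := key_uncross n W hW lam hlam π hsw hgt
        simp only [hg]
        rw [dif_pos hq]
        obtain ⟨h1, h2, h3, h4, h5⟩ := hq.choose_spec.choose_spec
        rw [hT, Finset.mem_coe, Finset.mem_product, Finset.mem_product]
        refine ⟨(hmemD _).mpr ⟨h3, h4, h5⟩, ?_, ?_⟩
        · exact Finset.mem_Icc.mpr ⟨h1.1, h1.2⟩
        · exact Finset.mem_Icc.mpr ⟨h2.1, h2.2⟩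
      · intro π1 h1 π2 h2 heq
        rw [← hRg π1 (Finset.mem_coe.mp h1), ← hRg π2 (Finset.mem_coe.mp h2), heq]
    have hTcard : T.card = D.card * (W * W) := by
      rw [hT, Finset.card_product, Finset.card_product, Int.card_Icc, Int.card_Icc]
      have e1 : (⌊lam + (W:ℝ)⌋ + 1 - (⌊lam + (W:ℝ)⌋ - W + 1)).toNat = W := by omega
      have e2 : (⌊lam + (W:ℝ)⌋ + W + 1 - (⌊lam + (W:ℝ)⌋ + 1)).toNat = W := by omega
      rw [e1, e2]
    rw [← hTcard]
    exact hcard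
  -- real arithmetic
  have ha : (A.card : ℝ) ≤ (D.card : ℝ) * (W:ℝ)^2 := by
    calc (A.card : ℝ) ≤ ((D.card * (W * W) : ℕ) : ℝ) := by exact_mod_cast hinjcard
      _ = (D.card : ℝ) * (W:ℝ)^2 := by push_cast; ring
  have hb : (A.card : ℝ) + (D.card : ℝ) ≤ (B.card : ℝ) := by exact_mod_cast hADle
  have h1 : (A.card : ℝ) * ((W:ℝ)^2 + 1) ≤ (W:ℝ)^2 * (B.card : ℝ) := by
    nlinarith [mul_le_mul_of_nonneg_left hb (le_of_lt hw2)]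
  have hgoal2 : (A.card : ℝ) ≤ (1 - 1/2 / (W:ℝ)^2) * (B.card : ℝ) := by
    have hrw : (1 - 1/2 / (W:ℝ)^2) * (B.card : ℝ) =
        ((2 * (W:ℝ)^2 - 1) * (B.card : ℝ)) / (2 * (W:ℝ)^2) := by
      field_simp
    have hc1 : (0:ℝ) ≤ 2*(W:ℝ)^2 - 1 := by nlinarith
    have hc2 : (0:ℝ) ≤ (W:ℝ)^2 * (B.card : ℝ) - (A.card : ℝ) * ((W:ℝ)^2 + 1) := by
      linarith
    have hc3 : (0:ℝ) ≤ (W:ℝ)^2 - 1 := by nlinarith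
    have hc4 : (0:ℝ) ≤ (A.card : ℝ) := Nat.cast_nonneg _
    have hkey : (W:ℝ)^2 * ((2*(W:ℝ)^2 - 1) * (B.card : ℝ) - (A.card : ℝ) * (2*(W:ℝ)^2)) =
        (2*(W:ℝ)^2 - 1) * ((W:ℝ)^2 * (B.card : ℝ) - (A.card : ℝ) * ((W:ℝ)^2 + 1)) +
          ((W:ℝ)^2 - 1) * (A.card : ℝ) := by ring
    have h5 : (0:ℝ) ≤ (W:ℝ)^2 * ((2*(W:ℝ)^2 - 1) * (B.card : ℝ) -
        (A.card : ℝ) * (2*(W:ℝ)^2)) := by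
      rw [hkey]
      exact add_nonneg (mul_nonneg hc1 hc2) (mul_nonneg hc3 hc4)
    rw [hrw, le_div_iff₀ (by positivity)]
    nlinarith [h5, hw2]
  have hSpos : (0:ℝ) < (S.card : ℝ) := by exact_mod_cast hS0
  rw [← mul_div_assoc]
  exact (div_le_div_iff_of_pos_right hSpos).mpr hgoal2
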